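/- Let (X,μ) be a probability space, T: X → X an invertible measure-preserving transformation, and F₀ a sub-σ-algebra with T⁻¹F₀ ⊆ F₀. Let p ≥ 1, β > 1, C > 0, and let φ ∈ L^∞(X,μ) with ∫_X φ dμ = 0 satisfy: |∫_X φ · (ψ∘T^n) dμ| ≤ C ‖ψ‖_∞ n^{-β} for all n ≥ 1 and all ψ ∈ L^∞(X,μ) that are F₀-measurable. Then for all n ≥ 1, ‖E[φ∘T^{-n} | F₀]‖_{L^p}^p ≤ C ‖φ‖_∞^{p−1} n^{-β}. -/

import Mathlib

open MeasureTheory Filter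
open scoped ENNReal Topology

lemma measurable_real_sign : Measurable Real.sign := by
  have : Real.sign = fun r : ℝ => if r < 0 then (-1:ℝ) else if 0 < r then 1 else 0 := by
    funext r; rfl
  rw [this]
  exact Measurable.ite measurableSet_Iio measurable_const
    (Measurable.ite measurableSet_Ioi measurable_const measurable_const)

lemma real_sign_mul_self (x : ℝ) : Real.sign x * x = |x| := by
  rcases lt_trichotomy x 0 with h | h | h
  · rw [Real.sign_of_neg h, abs_of_neg h]; ring
  · simp [h, Real.sign_zero]
  · rw [Real.sign_of_pos h, abs_of_pos h]; ring

lemma abs_real_sign_le (x : ℝ) : |Real.sign x| ≤ 1 := by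
  rcases lt_trichotomy x 0 with h | h | h
  · simp [Real.sign_of_neg h]
  · simp [h, Real.sign_zero]
  · simp [Real.sign_of_pos h]

/-- first half of the proof of Theorem 3.1: the correlation bound (a)
against `F₀`-measurable `L^∞` test functions yields
`‖E[φ∘T^{-n} | F₀]‖_{L^p}^p ≤ C ‖φ‖_∞^{p-1} n^{-β}` for all `n ≥ 1`. -/
theorem condexp_backward_bound
    {X : Type*} (F0 : MeasurableSpace X) [mX : MeasurableSpace X]
    (μ : Measure X) [IsProbabilityMeasure μ]
    (T : X ≃ᵐ X) (hT : MeasurePreserving (⇑T) μ μ)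
    (hF0 : F0 ≤ mX)
    (hF0T : MeasurableSpace.comap (⇑T) F0 ≤ F0)
    (p β C : ℝ) (hp : 1 ≤ p) (hβ : 1 < β) (hC : 0 < C)
    (φ : X → ℝ) (hφ : MemLp φ ∞ μ) (hmean : ∫ x, φ x ∂μ = 0)
    (ha : ∀ n : ℕ, 1 ≤ n → ∀ ψ : X → ℝ, Measurable[F0] ψ → MemLp ψ ∞ μ →
      |∫ x, φ x * ψ ((⇑T)^[n] x) ∂μ| ≤ C * (eLpNorm ψ ∞ μ).toReal * (n : ℝ) ^ (-β)) :
    ∀ n : ℕ, 1 ≤ n →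
      eLpNorm (μ[φ ∘ (⇑T.symm)^[n] | F0]) (ENNReal.ofReal p) μ ^ p ≤
        ENNReal.ofReal (C * (eLpNorm φ ∞ μ).toReal ^ (p - 1) * (n : ℝ) ^ (-β)) := by
  intro n hn
  set M : ℝ := (eLpNorm φ ∞ μ).toReal with hMdef
  have hM0 : 0 ≤ M := ENNReal.toReal_nonneg
  have hp0 : (0:ℝ) < p := lt_of_lt_of_le one_pos hp
  have hp1 : (0:ℝ) ≤ p - 1 := by linarith
  have hφ_top : eLpNorm φ ∞ μ ≠ ∞ := hφ.2.ne
  -- a.e. bound on φ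
  have hφbd : ∀ᵐ x ∂μ, |φ x| ≤ M := by
    filter_upwards [ae_le_eLpNormEssSup (f := φ) (μ := μ)] with x hx
    have h2 : ((‖φ x‖₊ : ℝ≥0∞)).toReal ≤ (eLpNormEssSup φ μ).toReal := by
      refine ENNReal.toReal_mono ?_ hx
      rw [← eLpNorm_exponent_top]; exact hφ_top
    simpa [← Real.norm_eq_abs, hMdef, eLpNorm_exponent_top] using h2
  -- g = φ ∘ T⁻ⁿ
  set g : X → ℝ := φ ∘ (⇑T.symm)^[n] with hgdef
  have hTn : MeasurePreserving ((⇑T.symm)^[n]) μ μ := (hT.symm T).iterate n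
  have hg_mem : MemLp g ∞ μ := hφ.comp_measurePreserving hTn
  have hg_int : Integrable g μ := hg_mem.integrable le_top
  have hgbd : ∀ᵐ x ∂μ, |g x| ≤ M := by
    have h := ae_of_ae_map hTn.aemeasurable (hTn.map_eq.symm ▸ hφbd)
    exact h
  -- f = conditional expectation
  set f : X → ℝ := μ[g | F0] with hfdef
  have hf_sm : StronglyMeasurable[F0] f := stronglyMeasurable_condExp
  have hfbd : ∀ᵐ x ∂μ, |f x| ≤ M := by
    have h := ae_bdd_condExp_of_ae_bdd (m := F0) (μ := μ) (R := M.toNNReal)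
      (f := g) ?_
    · filter_upwards [h] with x hx
      simpa [Real.coe_toNNReal M hM0] using hx
    · filter_upwards [hgbd] with x hx
      simpa [Real.coe_toNNReal M hM0] using hx
  -- ψ
  have haux : Measurable fun y : ℝ => Real.sign y * |y| ^ (p - 1) :=
    measurable_real_sign.mul
      ((continuous_abs.rpow_const fun y => Or.inr hp1).measurable)
  set ψ : X → ℝ := fun x => Real.sign (f x) * |f x| ^ (p - 1) with hψdef
  have hψ_meas : Measurable[F0] ψ := haux.comp hf_sm.measurable
  have hψbd : ∀ᵐ x ∂μ, ‖ψ x‖ ≤ M ^ (p - 1) := by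
    filter_upwards [hfbd] with x hx
    rw [Real.norm_eq_abs]
    calc |Real.sign (f x) * |f x| ^ (p - 1)|
        = |Real.sign (f x)| * abs (|f x| ^ (p - 1)) := abs_mul _ _
      _ ≤ 1 * abs (|f x| ^ (p - 1)) := by
          exact mul_le_mul_of_nonneg_right (abs_real_sign_le _) (abs_nonneg _)
      _ = |f x| ^ (p - 1) := by
          rw [one_mul, abs_of_nonneg (Real.rpow_nonneg (abs_nonneg _) _)]
      _ ≤ M ^ (p - 1) := Real.rpow_le_rpow (abs_nonneg _) hx hp1
  have hψ_asm : AEStronglyMeasurable ψ μ :=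
    (hψ_meas.mono hF0 le_rfl).aestronglyMeasurable
  have hψ_mem : MemLp ψ ∞ μ := memLp_top_of_bound hψ_asm _ hψbd
  have hψ_norm : (eLpNorm ψ ∞ μ).toReal ≤ M ^ (p - 1) := by
    have h := eLpNorm_le_of_ae_bound (p := (∞ : ℝ≥0∞)) (μ := μ) hψbd
    simp only [ENNReal.toReal_top, inv_zero, ENNReal.rpow_zero, one_mul] at h
    calc (eLpNorm ψ ∞ μ).toReal ≤ (ENNReal.ofReal (M ^ (p - 1))).toReal :=
          ENNReal.toReal_mono ENNReal.ofReal_ne_top h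
      _ = M ^ (p - 1) := ENNReal.toReal_ofReal (Real.rpow_nonneg hM0 _)
  -- pull-out property
  have hψg_int : Integrable (fun x => ψ x * g x) μ := hg_int.bdd_mul hψ_asm hψbd
  have hpull : μ[fun x => ψ x * g x | F0] =ᵐ[μ] fun x => ψ x * f x := by
    have := condExp_mul_of_stronglyMeasurable_left (m := F0) (μ := μ)
      (hψ_meas.stronglyMeasurable) hψg_int hg_int
    exact this
  have hint1 : ∫ x, ψ x * g x ∂μ = ∫ x, ψ x * f x ∂μ := by
    rw [← integral_condExp hF0 (f := fun x => ψ x * g x)]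
    exact integral_congr_ae hpull
  -- change of variables
  have hchange : ∀ (h : X → ℝ) (k : ℕ),
      ∫ x, h ((⇑T.symm)^[k] x) ∂μ = ∫ x, h x ∂μ := by
    intro h k
    induction k with
    | zero => simp
    | succ k ih =>
      have e : ∀ x, (⇑T.symm)^[k+1] x = (⇑T.symm)^[k] (T.symm x) :=
        fun x => Function.iterate_succ_apply _ _ _
      calc ∫ x, h ((⇑T.symm)^[k+1] x) ∂μ
          = ∫ x, (fun y => h ((⇑T.symm)^[k] y)) (T.symm x) ∂μ := by simp only [e]
        _ = ∫ y, h ((⇑T.symm)^[k] y) ∂μ := (hT.symm T).integral_comp' (fun y => h ((⇑T.symm)^[k] y))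
        _ = ∫ x, h x ∂μ := ih
  have hTT : ∀ x, (⇑T)^[n] ((⇑T.symm)^[n] x) = x := by
    intro x
    have hli : Function.LeftInverse ⇑T ⇑T.symm := T.apply_symm_apply
    exact (hli.iterate n) x
  have hint2 : ∫ x, g x * ψ x ∂μ = ∫ x, φ x * ψ ((⇑T)^[n] x) ∂μ := by
    calc ∫ x, g x * ψ x ∂μ
        = ∫ x, (fun y => φ y * ψ ((⇑T)^[n] y)) ((⇑T.symm)^[n] x) ∂μ := by
          refine integral_congr_ae (Eventually.of_forall fun x => ?_)
          simp only [hgdef, Function.comp_apply, hTT x]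
      _ = ∫ x, φ x * ψ ((⇑T)^[n] x) ∂μ := hchange (fun y => φ y * ψ ((⇑T)^[n] y)) n
  -- key estimate
  have hn0 : (0:ℝ) < n := by exact_mod_cast hn
  have hnb : (0:ℝ) < (n:ℝ) ^ (-β) := Real.rpow_pos_of_pos hn0 _
  have hkey : ∫ x, |f x| ^ p ∂μ ≤ C * M ^ (p - 1) * (n:ℝ) ^ (-β) := by
    have e1 : ∫ x, |f x| ^ p ∂μ = ∫ x, ψ x * f x ∂μ := by
      refine integral_congr_ae (Eventually.of_forall fun x => ?_)
      by_cases hx : f x = 0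
      · simp [hψdef, hx, Real.sign_zero, Real.zero_rpow (ne_of_gt hp0)]
      · have habs : |f x| ≠ 0 := abs_ne_zero.mpr hx
        show |f x| ^ p = Real.sign (f x) * |f x| ^ (p - 1) * f x
        have hpp : |f x| ^ p = |f x| ^ (p - 1 + 1) := by norm_num
        rw [hpp, Real.rpow_add_one habs]
        rw [mul_comm (Real.sign (f x)), mul_assoc, real_sign_mul_self]
    have e2 : ∫ x, ψ x * g x ∂μ = ∫ x, g x * ψ x ∂μ := by
      simp only [mul_comm]
    calc ∫ x, |f x| ^ p ∂μ = ∫ x, φ x * ψ ((⇑T)^[n] x) ∂μ := by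
          rw [e1, ← hint1, e2, hint2]
      _ ≤ |∫ x, φ x * ψ ((⇑T)^[n] x) ∂μ| := le_abs_self _
      _ ≤ C * (eLpNorm ψ ∞ μ).toReal * (n:ℝ) ^ (-β) := ha n hn ψ hψ_meas hψ_mem
      _ ≤ C * M ^ (p - 1) * (n:ℝ) ^ (-β) := by
          have := mul_le_mul_of_nonneg_left hψ_norm hC.le
          exact mul_le_mul_of_nonneg_right this hnb.le
  -- integrability of |f|^p
  have hf_asm : AEStronglyMeasurable f μ := (hf_sm.mono hF0).aestronglyMeasurable
  have hfp_meas : Measurable fun x => |f x| ^ p :=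
    ((continuous_abs.rpow_const fun y => Or.inr hp0.le).measurable).comp
      ((hf_sm.mono hF0).measurable)
  have hfp_int : Integrable (fun x => |f x| ^ p) μ := by
    refine (memLp_top_of_bound hfp_meas.aestronglyMeasurable (M ^ p) ?_).integrable le_top
    filter_upwards [hfbd] with x hx
    rw [Real.norm_eq_abs, abs_of_nonneg (Real.rpow_nonneg (abs_nonneg _) _)]
    exact Real.rpow_le_rpow (abs_nonneg _) hx hp0.le
  -- convert LHS
  have hLHS : eLpNorm f (ENNReal.ofReal p) μ ^ p
      = ∫⁻ x, (‖f x‖₊ : ℝ≥0∞) ^ p ∂μ := by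
    rw [eLpNorm_eq_lintegral_rpow_enorm_toReal
        (by simpa [ENNReal.ofReal_eq_zero] using hp0.not_ge) ENNReal.ofReal_ne_top,
      ENNReal.toReal_ofReal hp0.le, one_div, ← ENNReal.rpow_mul,
      inv_mul_cancel₀ hp0.ne', ENNReal.rpow_one]; rfl
  have hlint : ∫⁻ x, (‖f x‖₊ : ℝ≥0∞) ^ p ∂μ
      = ENNReal.ofReal (∫ x, |f x| ^ p ∂μ) := by
    rw [ofReal_integral_eq_lintegral_ofReal hfp_int
      (Eventually.of_forall fun x => Real.rpow_nonneg (abs_nonneg _) p)]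
    refine lintegral_congr fun x => ?_
    rw [← ENNReal.ofReal_rpow_of_nonneg (abs_nonneg _) hp0.le, ← Real.norm_eq_abs,
      ofReal_norm, enorm_eq_nnnorm]
  rw [hLHS, hlint]
  exact ENNReal.ofReal_le_ofReal hkey
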